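/- Let (T, M) be a valuation domain with residue field k and residue map π : T → k, and let D be an integral domain with fraction field k, viewed as a subring of k. If every flat overring of D is a localization of D (at some multiplicative subset of D), then every flat overring of the pullback A := D ×_k T = π⁻¹(D) is a localization of A (at some multiplicative subset of A). -/

import Mathlib

set_option maxHeartbeats 2000000
set_option synthInstance.maxHeartbeats 400000

/-- Let `(T, M)` be a valuation domain (a subring of its fraction field `K`) with residue
field `k` and residue map `π`, and let `D` be a subring of `k` with fraction field `k`.
If every flat overring of `D` is a localization of `D`, then every flat overring of the
pullback `A = π⁻¹(D)` is a localization of `A`. -/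
theorem stmt_12 {K k : Type*} [Field K] [Field k] (T : Subring K)
    [ValuationRing T] [IsFractionRing T K]
    (π : T →+* k) (hπ : Function.Surjective π)
    (hker : RingHom.ker π = IsLocalRing.maximalIdeal T)
    (D : Subring k) [IsFractionRing D k]
    (hD : ∀ S : Subring k, ∀ hDS : D ≤ S,
      @Module.Flat D S _ _ (RingHom.toAlgebra (Subring.inclusion hDS)).toModule →
        ∃ W : Submonoid D,
          @IsLocalization D _ W S _ (RingHom.toAlgebra (Subring.inclusion hDS))) :
    ∀ S : Subring K, ∀ hAS : (D.comap π).map T.subtype ≤ S,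
      @Module.Flat ((D.comap π).map T.subtype) S _ _
          (RingHom.toAlgebra (Subring.inclusion hAS)).toModule →
        ∃ W : Submonoid ((D.comap π).map T.subtype),
          @IsLocalization ((D.comap π).map T.subtype) _ W S _
            (RingHom.toAlgebra (Subring.inclusion hAS)) := by
  intro S hAS
  set A : Subring K := (D.comap π).map T.subtype with hA
  intro hflat
  classical
  have hAT : A ≤ T := by rintro x ⟨t, -, rfl⟩; exact t.2
  have memA : ∀ t : T, π t ∈ D → (t : K) ∈ A := fun t ht => ⟨t, ht, rfl⟩
  have piA : ∀ t : T, (t : K) ∈ A → π t ∈ D := by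
    rintro t ⟨t', ht', h⟩
    obtain rfl : t' = t := Subtype.ext h
    exact ht'
  have hM0 : ∀ t : T, t ∈ IsLocalRing.maximalIdeal T ↔ π t = 0 := by
    intro t; rw [← hker]; exact Iff.rfl
  have hMA : ∀ t : T, π t = 0 → (t : K) ∈ A := fun t ht =>
    memA t (by rw [ht]; exact D.zero_mem)
  -- if `π t ≠ 0` then `t` is a unit of `T`
  have hunit : ∀ t : T, π t ≠ 0 → ∃ v : T, t * v = 1 := by
    intro t ht
    have hu : IsUnit t := by
      by_contra h
      exact ht ((hM0 t).1 ((IsLocalRing.mem_maximalIdeal t).2 h))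
    obtain ⟨u, rfl⟩ := hu
    exact ⟨(u⁻¹ : Tˣ), u.mul_inv⟩
  -- elements of `K` outside `T` have inverses in the maximal ideal
  have hvalu : ∀ x : K, x ∉ T → ∃ m : T, π m = 0 ∧ (m : K) * x = 1 := by
    intro x hx
    have hx0 : x ≠ 0 := fun h => hx (h ▸ T.zero_mem)
    rcases ValuationRing.isInteger_or_isInteger T x with ⟨t, ht⟩ | ⟨t, ht⟩
    · exact absurd (show x ∈ T by rw [← ht]; exact t.2) hx
    · have htx : (t : K) = x⁻¹ := ht
      have hmul : (t : K) * x = 1 := by rw [htx, inv_mul_cancel₀ hx0]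
      have ht0 : (t : K) ≠ 0 := by
        intro h; rw [h, zero_mul] at hmul; exact zero_ne_one hmul
      refine ⟨t, ?_, hmul⟩
      by_contra h
      obtain ⟨v, hv⟩ := hunit t h
      have hv' : (t : K) * (v : K) = 1 := congrArg Subtype.val hv
      have : x = (v : K) := mul_left_cancel₀ ht0 (hmul.trans hv'.symm)
      exact hx (this ▸ v.2)
  by_cases hST : S ≤ T
  · -- Case `S ⊆ T` : use the hypothesis on `D` via the pullback structure.
    -- the residue map on `A`
    have hπA : ∀ a : A, π (Subring.inclusion hAT a) ∈ D := fun a => piA _ a.2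
    set ψ : A →+* D := (π.comp (Subring.inclusion hAT)).codRestrict D hπA with hψ
    have hψval : ∀ a : A, (ψ a : k) = π ⟨(a : K), hAT a.2⟩ := fun a => rfl
    have hψsurj : Function.Surjective ψ := by
      intro d
      obtain ⟨t, ht⟩ := hπ (d : k)
      refine ⟨⟨(t : K), memA t (by rw [ht]; exact d.2)⟩, Subtype.ext ?_⟩
      rw [hψval]
      exact ht
    -- the image of `S` in `k`
    set ρ : S →+* k := π.comp (Subring.inclusion hST) with hρ
    have hρval : ∀ s : S, ρ s = π ⟨(s : K), hST s.2⟩ := fun s => rfl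
    set E : Subring k := ρ.range with hE
    have hDE : D ≤ E := by
      intro d hd
      obtain ⟨t, ht⟩ := hπ d
      have htA : (t : K) ∈ A := memA t (by rw [ht]; exact hd)
      exact ⟨⟨(t : K), hAS htA⟩, ht⟩
    letI : Algebra A S := (Subring.inclusion hAS).toAlgebra
    haveI hflatAS : Module.Flat A S := hflat
    letI : Algebra A D := ψ.toAlgebra
    letI : Algebra D E := (Subring.inclusion hDE).toAlgebra
    letI : Algebra A E := ((Subring.inclusion hDE).comp ψ).toAlgebra
    haveI : IsScalarTower A D E := IsScalarTower.of_algebraMap_eq fun a => rfl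
    -- `ψ_E : S →ₐ[A] E`
    have hcomm : ∀ a : A, ρ.rangeRestrict (algebraMap A S a) = algebraMap A E a := by
      intro a
      exact Subtype.ext rfl
    let g : S →ₐ[A] E := { ρ.rangeRestrict with commutes' := hcomm }
    let Φ : TensorProduct A D S →ₐ[D] E :=
      Algebra.TensorProduct.lift (Algebra.ofId D E) g (fun _ _ => Commute.all _ _)
    have hΦtmul : ∀ s : S, Φ ((1 : D) ⊗ₜ[A] s) = ρ.rangeRestrict s := by
      intro s
      simp only [Φ, Algebra.TensorProduct.lift_tmul, map_one, one_mul]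
      rfl
    have htmul : ∀ x : TensorProduct A D S, ∃ s : S, x = (1 : D) ⊗ₜ[A] s := by
      intro x
      induction x using TensorProduct.induction_on with
      | zero => exact ⟨0, (TensorProduct.tmul_zero _ _).symm⟩
      | tmul d s =>
        obtain ⟨a, rfl⟩ := hψsurj d
        refine ⟨Subring.inclusion hAS a * s, ?_⟩
        have h1 : (ψ a : D) = a • (1 : D) := by
          rw [Algebra.smul_def, RingHom.algebraMap_toAlgebra, mul_one]
        have h2 : Subring.inclusion hAS a * s = a • s := by
          rw [Algebra.smul_def, RingHom.algebraMap_toAlgebra]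
        rw [h1, h2]
        exact (TensorProduct.smul_tmul _ _ _)
      | add x y hx hy =>
        obtain ⟨s, rfl⟩ := hx
        obtain ⟨t, rfl⟩ := hy
        exact ⟨s + t, (TensorProduct.tmul_add _ _ _).symm⟩
    have hinj : Function.Injective Φ := by
      rw [injective_iff_map_eq_zero]
      intro x hx
      obtain ⟨s, rfl⟩ := htmul x
      rw [hΦtmul] at hx
      have hρs : ρ s = 0 := by
        have := congrArg Subtype.val hx
        rwa [RingHom.coe_rangeRestrict] at this
      have hsA : (s : K) ∈ A := hMA ⟨(s : K), hST s.2⟩ hρs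
      have h1 : ((⟨(s : K), hsA⟩ : A) • (1 : S)) = s := by
        rw [Algebra.smul_def, RingHom.algebraMap_toAlgebra, mul_one]
        exact Subtype.ext rfl
      have hψa : ψ ⟨(s : K), hsA⟩ = 0 := Subtype.ext hρs
      calc (1 : D) ⊗ₜ[A] s = (1 : D) ⊗ₜ[A] ((⟨(s : K), hsA⟩ : A) • (1 : S)) := by rw [h1]
        _ = ((⟨(s : K), hsA⟩ : A) • (1 : D)) ⊗ₜ[A] (1 : S) :=
            (TensorProduct.smul_tmul _ _ _).symm
        _ = (ψ ⟨(s : K), hsA⟩ : D) ⊗ₜ[A] (1 : S) := by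
            rw [Algebra.smul_def, RingHom.algebraMap_toAlgebra, mul_one]
        _ = 0 := by rw [hψa, TensorProduct.zero_tmul]
    have hsurj : Function.Surjective Φ := by
      rintro ⟨e, s, rfl⟩
      exact ⟨(1 : D) ⊗ₜ[A] s, by rw [hΦtmul]; exact Subtype.ext rfl⟩
    haveI : Module.Flat D (TensorProduct A D S) := inferInstance
    have hflatE : Module.Flat D E :=
      Module.Flat.of_linearEquiv
        (LinearEquiv.ofBijective Φ.toLinearMap ⟨hinj, hsurj⟩).symm
    obtain ⟨W, hW⟩ := hD E hDE hflatE
    haveI := hW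
    refine ⟨W.comap ψ.toMonoidHom, ?_⟩
    constructor
    constructor
    · -- map_units
      rintro ⟨a, ha⟩
      have hu := IsLocalization.map_units (M := W) E ⟨ψ a, ha⟩
      obtain ⟨e, he⟩ := hu.exists_right_inv
      obtain ⟨s, hs⟩ := e.2
      have hπ1 : π (Subring.inclusion hAT a * Subring.inclusion hST s) = 1 := by
        rw [map_mul]
        have h1 : π (Subring.inclusion hAT a) = (ψ a : k) := rfl
        have h2 : π (Subring.inclusion hST s) = (e : k) := hs
        rw [h1, h2]
        have := congrArg Subtype.val he
        have h3 : ((algebraMap D E (ψ a) : E) : k) = (ψ a : k) := rfl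
        exact congrArg Subtype.val he
      obtain ⟨v, hv⟩ := hunit _ (by rw [hπ1]; exact one_ne_zero)
      have hπv : π v = 1 := by
        have h4 := congrArg π hv
        rw [map_mul, hπ1, one_mul, map_one] at h4
        exact h4
      have hvA : (v : K) ∈ A := memA v (by rw [hπv]; exact D.one_mem)
      refine IsUnit.of_mul_eq_one (s * ⟨(v : K), hAS hvA⟩) (Subtype.ext ?_)
      have hv' : ((a : K) * (s : K)) * (v : K) = 1 := congrArg Subtype.val hv
      show (a : K) * ((s : K) * (v : K)) = 1
      rw [← mul_assoc]
      exact hv'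
    · -- surj
      intro z
      obtain ⟨⟨d, w⟩, hdw⟩ := IsLocalization.surj (M := W) (S := E) (ρ.rangeRestrict z)
      obtain ⟨t, ht⟩ := hπ ((w : D) : k)
      have htA : (t : K) ∈ A := memA t (by rw [ht]; exact (w : D).2)
      have hψt : ψ ⟨(t : K), htA⟩ = (w : D) := Subtype.ext (by rw [hψval]; exact ht)
      have hmemW : (⟨(t : K), htA⟩ : A) ∈ W.comap ψ.toMonoidHom := by
        show ψ _ ∈ W
        rw [hψt]
        exact w.2
      have hπzt : π (Subring.inclusion hST z * t) = (d : k) := by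
        rw [map_mul, ht]
        have h5 := congrArg Subtype.val hdw
        have h6 : ((ρ.rangeRestrict z : E) : k) = π (Subring.inclusion hST z) := rfl
        have h7 : ((algebraMap D E d : E) : k) = (d : k) := rfl
        have h8 : ((algebraMap D E (w : D) : E) : k) = ((w : D) : k) := rfl
        rw [Subring.coe_mul, h6, h7, h8] at h5
        exact h5
      have hztA : ((z : K) * (t : K)) ∈ A := by
        have h9 : ((Subring.inclusion hST z * t : T) : K) = (z : K) * (t : K) := rfl
        rw [← h9]
        exact memA _ (by rw [hπzt]; exact d.2)
      exact ⟨⟨⟨_, hztA⟩, ⟨⟨(t : K), htA⟩, hmemW⟩⟩, Subtype.ext rfl⟩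
    · -- exists_of_eq
      intro x y h
      obtain rfl : x = y := Subtype.ext (congrArg (fun s : S => (s : K)) h)
      exact ⟨1, rfl⟩
  · -- Case `S ⊄ T` : then `T ⊆ S` and `S` is a localization of `A` without flatness.
    obtain ⟨x, hxS, hxT⟩ := SetLike.not_le_iff_exists.1 hST
    have hTS : ∀ y : K, y ∈ T → y ∈ S := by
      intro y hy
      obtain ⟨m, hm0, hmx⟩ := hvalu x hxT
      have h1 : π ((⟨y, hy⟩ : T) * m) = 0 := by rw [map_mul, hm0, mul_zero]
      have h2 : y * (m : K) ∈ S := hAS (hMA _ h1)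
      have h3 : y * (m : K) * x = y := by
        rw [mul_assoc, hmx, mul_one]
      rw [← h3]
      exact S.mul_mem h2 hxS
    refine ⟨{ carrier := {a : A | ∃ y ∈ S, (a : K) * y = 1}
              one_mem' := ⟨1, S.one_mem, by rw [OneMemClass.coe_one, mul_one]⟩
              mul_mem' := ?_ }, ?_⟩
    · rintro a b ⟨ya, hya, hab⟩ ⟨yb, hyb, hbb⟩
      refine ⟨ya * yb, S.mul_mem hya hyb, ?_⟩
      rw [Subring.coe_mul]
      calc (a : K) * (b : K) * (ya * yb) = ((a : K) * ya) * ((b : K) * yb) := by ring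
        _ = 1 := by rw [hab, hbb, mul_one]
    · letI : Algebra A S := (Subring.inclusion hAS).toAlgebra
      constructor
      constructor
      · rintro ⟨a, z, hzS, hz⟩
        exact IsUnit.of_mul_eq_one (⟨z, hzS⟩ : S) (Subtype.ext hz)
      · intro z
        by_cases hzT : (z : K) ∈ T
        · obtain ⟨⟨d, w⟩, hdw⟩ := IsLocalization.surj (nonZeroDivisors D) (π ⟨(z : K), hzT⟩)
          obtain ⟨t2, ht2⟩ := hπ ((w : D) : k)
          have hw0 : ((w : D) : k) ≠ 0 := by
            intro h
            exact nonZeroDivisors.coe_ne_zero w (Subtype.ext h)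
          obtain ⟨v, hv⟩ := hunit t2 (by rw [ht2]; exact hw0)
          have ht2A : (t2 : K) ∈ A := memA t2 (by rw [ht2]; exact (w : D).2)
          have haW : (⟨(t2 : K), ht2A⟩ : A) ∈ {a : A | ∃ y ∈ S, (a : K) * y = 1} := by
            refine ⟨(v : K), hTS _ v.2, ?_⟩
            exact congrArg Subtype.val hv
          have hzt2 : (z : K) * (t2 : K) ∈ A := by
            have h10 : ((⟨(z : K), hzT⟩ * t2 : T) : K) = (z : K) * (t2 : K) := rfl
            rw [← h10]
            refine memA _ ?_
            rw [map_mul, ht2]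
            have h11 : algebraMap D k d = (d : k) := rfl
            have h12 : algebraMap D k (w : D) = ((w : D) : k) := rfl
            rw [h11, h12] at hdw
            rw [hdw]
            exact d.2
          exact ⟨⟨⟨_, hzt2⟩, ⟨⟨(t2 : K), ht2A⟩, haW⟩⟩, Subtype.ext rfl⟩
        · obtain ⟨m, hm0, hmz⟩ := hvalu (z : K) hzT
          have hmA : (m : K) ∈ A := hMA m hm0
          have haW : (⟨(m : K), hmA⟩ : A) ∈ {a : A | ∃ y ∈ S, (a : K) * y = 1} :=
            ⟨(z : K), z.2, hmz⟩
          refine ⟨⟨1, ⟨⟨(m : K), hmA⟩, haW⟩⟩, Subtype.ext ?_⟩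
          show (z : K) * (m : K) = ((1 : A) : K)
          rw [mul_comm] at hmz
          rw [hmz, OneMemClass.coe_one]
      · intro x y h
        obtain rfl : x = y := Subtype.ext (congrArg (fun s : S => (s : K)) h)
        exact ⟨1, rfl⟩
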